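/- Let m > 1 be an integer and let h_j/k_j < h_{j+1}/k_{j+1} < h_{j+2}/k_{j+2} be three successive fractions of F(B(2m),m), i.e. each is the successor of the preceding one (all fractions in lowest terms), and suppose h_{j+2}/k_{j+2} ≤ 1/2. Then h_j = ⌊(k_{j+2}−h_{j+2}+m)/(k_{j+1}−h_{j+1})⌋·h_{j+1} − h_{j+2}, k_j = ⌊(k_{j+2}−h_{j+2}+m)/(k_{j+1}−h_{j+1})⌋·k_{j+1} − k_{j+2}, h_{j+2} = ⌊(k_j−h_j+m)/(k_{j+1}−h_{j+1})⌋·h_{j+1} − h_j, and k_{j+2} = ⌊(k_j−h_j+m)/(k_{j+1}−h_{j+1})⌋·k_{j+1} − k_j. -/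

import Mathlib

/-- The Farey sequence `F_n` of order `n`, viewed as the set of rationals `q`
with `0 ≤ q ≤ 1` whose lowest-terms denominator is at most `n`. -/
def Farey (n : ℕ) : Set ℚ :=
  {q : ℚ | 0 ≤ q ∧ q ≤ 1 ∧ q.den ≤ n}

/-- The Farey subsequence `F(B(n),m)`: fractions `h/k ∈ F_n` in lowest terms
with `h ≤ m` and `k - h ≤ n - m`. -/
def FareyB (n m : ℕ) : Set ℚ :=
  {q : ℚ | 0 ≤ q ∧ q ≤ 1 ∧ q.den ≤ n ∧ q.num ≤ (m : ℤ) ∧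
    (q.den : ℤ) - q.num ≤ (n : ℤ) - (m : ℤ)}

/-- `f'` is the predecessor of `f` in the set `S` of rationals. -/
def IsPredIn (S : Set ℚ) (f' f : ℚ) : Prop :=
  f' ∈ S ∧ f ∈ S ∧ f' < f ∧ ∀ g ∈ S, ¬(f' < g ∧ g < f)

/-- `f'` is the successor of `f` in the set `S` of rationals. -/
def IsSuccIn (S : Set ℚ) (f f' : ℚ) : Prop :=
  f ∈ S ∧ f' ∈ S ∧ f < f' ∧ ∀ g ∈ S, ¬(f < g ∧ g < f')

lemma fr_num {a b : ℤ} (hb : 0 < b) (h : Int.gcd a b = 1) : ((a : ℚ) / (b : ℚ)).num = a :=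
  Rat.num_div_eq_of_coprime hb h

lemma fr_den {a b : ℤ} (hb : 0 < b) (h : Int.gcd a b = 1) :
    ((((a : ℚ) / (b : ℚ)).den : ℤ)) = b :=
  Rat.den_div_eq_of_coprime hb h

/-- Facts about a fraction in the left half of `FareyB (2m) m`. -/
lemma left_mem (m : ℕ) (h k : ℤ) (hk : 0 < k) (hc : Int.gcd h k = 1)
    (hmem : (h : ℚ) / k ∈ FareyB (2 * m) m) (hhalf : (h : ℚ) / k ≤ 1 / 2) :
    0 ≤ h ∧ 2 * h ≤ k ∧ k - h ≤ (m : ℤ) ∧ 0 < k - h ∧ Int.gcd h (k - h) = 1 ∧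
      (h : ℚ) / ((k : ℚ) - (h : ℚ)) ∈ Farey m := by
  obtain ⟨h0, h1, hden, hnum, hdiff⟩ := hmem
  have hkq : (0 : ℚ) < (k : ℚ) := by exact_mod_cast hk
  have hh0 : 0 ≤ h := by
    have := (le_div_iff₀ hkq).mp (by simpa using h0)
    simpa using (by exact_mod_cast this : (0 : ℤ) * k ≤ h)
  have h2h : 2 * h ≤ k := by
    have hq := (div_le_div_iff₀ hkq (by norm_num : (0:ℚ) < 2)).mp hhalf
    have h2 : h * 2 ≤ 1 * k := by exact_mod_cast hq
    omega
  have hkh0 : 0 < k - h := by omega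
  have hnum' : ((h : ℚ) / k).num = h := fr_num hk hc
  have hden' : ((((h : ℚ) / k).den : ℤ)) = k := fr_den hk hc
  have hkhm : k - h ≤ (m : ℤ) := by
    rw [hnum', hden'] at hdiff
    push_cast at hdiff
    omega
  have hcop' : Int.gcd h (k - h) = 1 := by
    rw [← Int.isCoprime_iff_gcd_eq_one]
    have := Int.isCoprime_iff_gcd_eq_one.mpr hc
    simpa [sub_eq_add_neg] using this.add_mul_left_right (-1)
  refine ⟨hh0, h2h, hkhm, hkh0, hcop', ?_, ?_, ?_⟩
  · apply div_nonneg (by exact_mod_cast hh0)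
    have : (0:ℚ) < (k:ℚ) - (h:ℚ) := by
      have := (by exact_mod_cast hkh0 : (0:ℚ) < ((k - h : ℤ) : ℚ)); push_cast at this; linarith
    linarith
  · rw [div_le_one (by exact_mod_cast hkh0 : (0:ℚ) < ((k:ℚ) - (h:ℚ)))]
    have : (h : ℤ) ≤ k - h := by omega
    exact_mod_cast (by push_cast; exact_mod_cast this : (h:ℚ) ≤ (k:ℚ) - (h:ℚ))
  · have hd : (((h : ℚ) / ((k : ℚ) - (h : ℚ))).den : ℤ) = k - h := by
      have := fr_den hkh0 hcop'
      push_cast at this ⊢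
      convert this using 3
    have : (((h : ℚ) / ((k : ℚ) - (h : ℚ))).den : ℤ) ≤ (m : ℤ) := by rw [hd]; exact hkhm
    exact_mod_cast this

set_option maxHeartbeats 1000000 in
/-- Transfer of successor from the left half of `FareyB (2m) m` to `Farey m`. -/
lemma succ_transfer (m : ℕ) (h k h' k' : ℤ) (hk : 0 < k) (hk' : 0 < k')
    (hc : Int.gcd h k = 1) (hc' : Int.gcd h' k' = 1)
    (hhalf' : (h' : ℚ) / k' ≤ 1 / 2)
    (hs : IsSuccIn (FareyB (2 * m) m) ((h : ℚ) / k) ((h' : ℚ) / k')) :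
    IsSuccIn (Farey m) ((h : ℚ) / ((k : ℚ) - (h : ℚ))) ((h' : ℚ) / ((k' : ℚ) - (h' : ℚ))) := by
  obtain ⟨hmem, hmem', hlt, hbet⟩ := hs
  have hkq : (0 : ℚ) < (k : ℚ) := by exact_mod_cast hk
  have hkq' : (0 : ℚ) < (k' : ℚ) := by exact_mod_cast hk'
  have hhalf : (h : ℚ) / k ≤ 1 / 2 := hlt.le.trans hhalf'
  obtain ⟨hh0, h2h, hkhm, hkh0, hcop, himg⟩ := left_mem m h k hk hc hmem hhalf
  obtain ⟨hh0', h2h', hkhm', hkh0', hcop', himg'⟩ := left_mem m h' k' hk' hc' hmem' hhalf'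
  have hdq : (0:ℚ) < (k:ℚ) - (h:ℚ) := by
    have : (0:ℚ) < ((k - h : ℤ) : ℚ) := by exact_mod_cast hkh0
    push_cast at this; linarith
  have hdq' : (0:ℚ) < (k':ℚ) - (h':ℚ) := by
    have : (0:ℚ) < ((k' - h' : ℤ) : ℚ) := by exact_mod_cast hkh0'
    push_cast at this; linarith
  have hhk : h * k' < h' * k := by
    have := (div_lt_div_iff₀ hkq hkq').mp hlt
    exact_mod_cast this
  refine ⟨himg, himg', ?_, ?_⟩
  · rw [div_lt_div_iff₀ hdq hdq']
    have : (h:ℤ) * (k' - h') < h' * (k - h) := by nlinarith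
    have hq : ((h * (k' - h') : ℤ) : ℚ) < ((h' * (k - h) : ℤ) : ℚ) := by exact_mod_cast this
    push_cast at hq; linarith
  · rintro g ⟨hg0, hg1, hgden⟩ ⟨hlo, hhi⟩
    set p : ℤ := g.num with hp
    set q : ℤ := (g.den : ℤ) with hq
    have hq0 : 0 < q := by rw [hq]; exact_mod_cast g.pos
    have hgpq : g = (p : ℚ) / q := by rw [hp, hq]; exact_mod_cast (Rat.num_div_den g).symm
    have hp0 : 0 ≤ p := Rat.num_nonneg.mpr hg0
    have hpq : p ≤ q := by
      have := (div_le_one (by exact_mod_cast hq0 : (0:ℚ) < (q:ℚ))).mp (hgpq ▸ hg1)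
      exact_mod_cast this
    have hqm : q ≤ (m : ℤ) := by rw [hq]; exact_mod_cast hgden
    have hcoppq : Int.gcd p q = 1 := g.reduced
    have hcopr : Int.gcd p (p + q) = 1 := by
      rw [← Int.isCoprime_iff_gcd_eq_one]
      have := Int.isCoprime_iff_gcd_eq_one.mpr hcoppq
      simpa [add_comm] using this.add_mul_left_right 1
    have hpq0 : 0 < p + q := by omega
    have hpq0' : (0:ℚ) < (p:ℚ) + (q:ℚ) := by
      have : (0:ℚ) < ((p + q : ℤ) : ℚ) := by exact_mod_cast hpq0
      push_cast at this; linarith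
    -- the preimage r = p/(p+q) lies in FareyB (2m) m
    have hrnum : (((p : ℚ) / ((p:ℚ) + (q:ℚ))).num) = p := by
      have := fr_num hpq0 hcopr; push_cast at this; convert this using 2 <;> push_cast <;> ring
    have hrden : ((((p : ℚ) / ((p:ℚ) + (q:ℚ))).den : ℤ)) = p + q := by
      have := fr_den hpq0 hcopr; push_cast at this; convert this using 3 <;> push_cast <;> ring
    have hrmem : (p : ℚ) / ((p:ℚ) + (q:ℚ)) ∈ FareyB (2 * m) m := by
      refine ⟨div_nonneg (by exact_mod_cast hp0) hpq0'.le, ?_, ?_, ?_, ?_⟩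
      · rw [div_le_one hpq0']
        have : (p:ℚ) ≤ ((p + q : ℤ) : ℚ) := by exact_mod_cast (by omega : p ≤ p + q)
        push_cast at this; linarith
      · have : ((((p : ℚ) / ((p:ℚ) + (q:ℚ))).den : ℤ)) ≤ ((2 * m : ℕ) : ℤ) := by
          rw [hrden]; push_cast; omega
        exact_mod_cast this
      · rw [hrnum]; omega
      · rw [hrnum, hrden]; push_cast; omega
    -- r lies strictly between h/k and h'/k'
    have hlo' : h * q < p * (k - h) := by
      have := (div_lt_div_iff₀ hdq (by exact_mod_cast hq0 : (0:ℚ) < (q:ℚ))).mp (hgpq ▸ hlo)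
      have h2 : ((h * q : ℤ) : ℚ) < ((p * (k - h) : ℤ) : ℚ) := by push_cast; linarith
      exact_mod_cast h2
    have hhi' : p * (k' - h') < h' * q := by
      have := (div_lt_div_iff₀ (by exact_mod_cast hq0 : (0:ℚ) < (q:ℚ)) hdq').mp (hgpq ▸ hhi)
      have h2 : ((p * (k' - h') : ℤ) : ℚ) < ((h' * q : ℤ) : ℚ) := by push_cast; linarith
      exact_mod_cast h2
    have hL : (h : ℚ) / k < (p : ℚ) / ((p:ℚ) + (q:ℚ)) := by
      rw [div_lt_div_iff₀ hkq hpq0']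
      have : h * (p + q) < p * k := by nlinarith
      have h2 : ((h * (p + q) : ℤ) : ℚ) < ((p * k : ℤ) : ℚ) := by exact_mod_cast this
      push_cast at h2; linarith
    have hR : (p : ℚ) / ((p:ℚ) + (q:ℚ)) < (h' : ℚ) / k' := by
      rw [div_lt_div_iff₀ hpq0' hkq']
      have : p * k' < h' * (p + q) := by nlinarith
      have h2 : ((p * k' : ℤ) : ℚ) < ((h' * (p + q) : ℤ) : ℚ) := by exact_mod_cast this
      push_cast at h2; linarith
    exact hbet _ hrmem ⟨hL, hR⟩

lemma farey_succ (n : ℕ) (a b c d : ℤ) (hb : 0 < b) (hd : 0 < d)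
    (hab : Int.gcd a b = 1) (hcd : Int.gcd c d = 1)
    (hsucc : IsSuccIn (Farey n) ((a : ℚ) / b) ((c : ℚ) / d)) :
    b * c - a * d = 1 ∧ (n : ℤ) < b + d := by
  obtain ⟨⟨ha0, ha1, haden⟩, ⟨hc0, hc1, hcden⟩, hlt, hbet⟩ := hsucc
  have hbq : (0 : ℚ) < (b : ℚ) := by exact_mod_cast hb
  have hdq : (0 : ℚ) < (d : ℚ) := by exact_mod_cast hd
  -- basic integer facts
  have hbn : b ≤ (n : ℤ) := by rw [← fr_den hb hab]; exact_mod_cast haden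
  have hdn : d ≤ (n : ℤ) := by rw [← fr_den hd hcd]; exact_mod_cast hcden
  have ha0' : 0 ≤ a := by
    have := (le_div_iff₀ hbq).mp (by simpa using ha0)
    simpa using (by exact_mod_cast this : (0 : ℤ) * b ≤ a)
  have hcd' : c ≤ d := by
    have := (div_le_one hdq).mp hc1
    exact_mod_cast this
  have hacbd : a * d < c * b := by
    have := (div_lt_div_iff₀ hbq hdq).mp hlt
    exact_mod_cast this
  have hab' : a < b := by
    have h1 : (a : ℚ) / b < 1 := lt_of_lt_of_le hlt hc1
    have := (div_lt_one hbq).mp h1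
    exact_mod_cast this
  -- construct the successor candidate x / y
  obtain ⟨u, v, huv⟩ := Int.isCoprime_iff_gcd_eq_one.mpr hab
  set y : ℤ := (n : ℤ) - ((n : ℤ) + u) % b with hy_def
  have hmod0 : 0 ≤ ((n : ℤ) + u) % b := Int.emod_nonneg _ (by omega)
  have hmod1 : ((n : ℤ) + u) % b < b := Int.emod_lt_of_pos _ hb
  have hy1 : (n : ℤ) - b < y := by omega
  have hy2 : y ≤ (n : ℤ) := by omega
  have hy0 : 1 ≤ y := by omega
  have hdvd1 : b ∣ y + u := by
    have hed := Int.emod_add_mul_ediv ((n : ℤ) + u) b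
    exact ⟨((n:ℤ) + u) / b, by linarith⟩
  have hdvd : b ∣ a * y + 1 := by
    have h1 : a * y + 1 = a * (y + u) + (1 - u * a) := by ring
    have h2 : 1 - u * a = v * b := by linarith [huv]
    rw [h1, h2]
    exact dvd_add (Dvd.dvd.mul_left hdvd1 a) ⟨v, mul_comm v b⟩
  obtain ⟨x, hx⟩ := hdvd
  -- hx : a * y + 1 = b * x
  have hx1 : 1 ≤ x := by nlinarith
  have hxy : x ≤ y := by nlinarith
  have hxycop : Int.gcd x y = 1 := by
    rw [← Int.isCoprime_iff_gcd_eq_one]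
    exact ⟨b, -a, by linarith [hx]⟩
  have hyq : (0 : ℚ) < (y : ℚ) := by exact_mod_cast hy0
  have hxy_mem : (x : ℚ) / y ∈ Farey n := by
    refine ⟨div_nonneg (by exact_mod_cast (by omega : (0:ℤ) ≤ x)) hyq.le, ?_, ?_⟩
    · rw [div_le_one hyq]; exact_mod_cast hxy
    · have := fr_den (by omega : (0:ℤ) < y) hxycop
      have h2 : (((x : ℚ) / y).den : ℤ) ≤ (n : ℤ) := by rw [this]; exact hy2
      exact_mod_cast h2
  have hlt2 : (a : ℚ) / b < (x : ℚ) / y := by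
    rw [div_lt_div_iff₀ hbq hyq]
    exact_mod_cast (by nlinarith : a * y < x * b)
  -- c/d ≤ x/y from successor property
  have hle1 : (c : ℚ) / d ≤ (x : ℚ) / y := by
    by_contra hcon
    push_neg at hcon
    exact hbet _ hxy_mem ⟨hlt2, hcon⟩
  -- x/y ≤ c/d by the determinant estimate
  have hle2 : (x : ℚ) / y ≤ (c : ℚ) / d := by
    by_contra hcon
    push_neg at hcon
    have h1 : c * y < x * d := by
      have := (div_lt_div_iff₀ hdq hyq).mp hcon
      exact_mod_cast this
    have h2 : 1 ≤ x * d - c * y := by linarith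
    have h3 : 1 ≤ c * b - a * d := by linarith
    have key : d = b * (x * d - c * y) + y * (c * b - a * d) := by
      linear_combination d * hx
    have e1 : b * 1 ≤ b * (x * d - c * y) := mul_le_mul_of_nonneg_left h2 hb.le
    have e2 : y * 1 ≤ y * (c * b - a * d) := mul_le_mul_of_nonneg_left h3 (by omega)
    linarith
  have heq : (c : ℚ) / d = (x : ℚ) / y := le_antisymm hle1 hle2
  obtain ⟨hcx, hdy⟩ := Rat.div_int_inj hd (by omega) hcd hxycop heq
  subst hcx hdy
  constructor
  · linarith [hx]
  · omega


lemma floor_eq_of {t a b : ℤ} (hb : 0 < b) (h1 : t * b ≤ a) (h2 : a < (t + 1) * b) :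
    ⌊(a : ℚ) / (b : ℚ)⌋ = t := by
  have hbq : (0 : ℚ) < (b : ℚ) := by exact_mod_cast hb
  rw [Int.floor_eq_iff]
  constructor
  · rw [le_div_iff₀ hbq]; exact_mod_cast h1
  · rw [div_lt_iff₀ hbq]; exact_mod_cast h2

set_option maxHeartbeats 1600000 in
/-- Recurrences among three successive fractions of `F(B(2m),m)` lying in the
left halfsequence (`h_{j+2}/k_{j+2} ≤ 1/2`). -/
theorem stmt_19 (m : ℕ) (hm : 1 < m)
    (h₁ k₁ h₂ k₂ h₃ k₃ : ℤ)
    (hk₁ : 0 < k₁) (hk₂ : 0 < k₂) (hk₃ : 0 < k₃)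
    (hc₁ : Int.gcd h₁ k₁ = 1) (hc₂ : Int.gcd h₂ k₂ = 1) (hc₃ : Int.gcd h₃ k₃ = 1)
    (hm₁ : (h₁ : ℚ) / (k₁ : ℚ) ∈ FareyB (2 * m) m)
    (hm₂ : (h₂ : ℚ) / (k₂ : ℚ) ∈ FareyB (2 * m) m)
    (hm₃ : (h₃ : ℚ) / (k₃ : ℚ) ∈ FareyB (2 * m) m)
    (hs₁ : IsSuccIn (FareyB (2 * m) m) ((h₁ : ℚ) / (k₁ : ℚ)) ((h₂ : ℚ) / (k₂ : ℚ)))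
    (hs₂ : IsSuccIn (FareyB (2 * m) m) ((h₂ : ℚ) / (k₂ : ℚ)) ((h₃ : ℚ) / (k₃ : ℚ)))
    (hle : (h₃ : ℚ) / (k₃ : ℚ) ≤ 1 / 2) :
    h₁ = ⌊((k₃ : ℚ) - (h₃ : ℚ) + (m : ℚ)) / ((k₂ : ℚ) - (h₂ : ℚ))⌋ * h₂ - h₃ ∧
    k₁ = ⌊((k₃ : ℚ) - (h₃ : ℚ) + (m : ℚ)) / ((k₂ : ℚ) - (h₂ : ℚ))⌋ * k₂ - k₃ ∧
    h₃ = ⌊((k₁ : ℚ) - (h₁ : ℚ) + (m : ℚ)) / ((k₂ : ℚ) - (h₂ : ℚ))⌋ * h₂ - h₁ ∧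
    k₃ = ⌊((k₁ : ℚ) - (h₁ : ℚ) + (m : ℚ)) / ((k₂ : ℚ) - (h₂ : ℚ))⌋ * k₂ - k₁ := by
  have hle₂ : (h₂ : ℚ) / k₂ ≤ 1 / 2 := hs₂.2.2.1.le.trans hle
  have hle₁ : (h₁ : ℚ) / k₁ ≤ 1 / 2 := hs₁.2.2.1.le.trans hle₂
  obtain ⟨_, _, hq₁m, hq₁0, hcop₁, _⟩ := left_mem m h₁ k₁ hk₁ hc₁ hm₁ hle₁
  obtain ⟨_, _, hq₂m, hq₂0, hcop₂, _⟩ := left_mem m h₂ k₂ hk₂ hc₂ hm₂ hle₂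
  obtain ⟨_, _, hq₃m, hq₃0, hcop₃, _⟩ := left_mem m h₃ k₃ hk₃ hc₃ hm₃ hle
  have ht₁ := succ_transfer m h₁ k₁ h₂ k₂ hk₁ hk₂ hc₁ hc₂ hle₂ hs₁
  have ht₂ := succ_transfer m h₂ k₂ h₃ k₃ hk₂ hk₃ hc₂ hc₃ hle hs₂
  -- rewrite the transferred successors into the (a : ℚ)/(b : ℚ) shape
  have hcast : ∀ h k : ℤ, (h : ℚ) / ((k : ℚ) - (h : ℚ)) = (h : ℚ) / (((k - h : ℤ)) : ℚ) := by
    intro h k; push_cast; ring_nf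
  rw [hcast h₁ k₁, hcast h₂ k₂] at ht₁
  rw [hcast h₂ k₂, hcast h₃ k₃] at ht₂
  obtain ⟨e₁, hn₁⟩ := farey_succ m h₁ (k₁ - h₁) h₂ (k₂ - h₂) hq₁0 hq₂0 hcop₁ hcop₂ ht₁
  obtain ⟨e₂, hn₂⟩ := farey_succ m h₂ (k₂ - h₂) h₃ (k₃ - h₃) hq₂0 hq₃0 hcop₂ hcop₃ ht₂
  -- determinant identities give the common coefficient t
  have hdet : h₂ * ((k₁ - h₁) + (k₃ - h₃)) = (k₂ - h₂) * (h₁ + h₃) := by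
    linear_combination e₁ - e₂
  have hdvd : (k₂ - h₂) ∣ ((k₁ - h₁) + (k₃ - h₃)) := by
    have hcop := Int.isCoprime_iff_gcd_eq_one.mpr hcop₂
    have hmul : (k₂ - h₂) ∣ h₂ * ((k₁ - h₁) + (k₃ - h₃)) := ⟨h₁ + h₃, hdet⟩
    exact (hcop.symm).dvd_of_dvd_mul_left hmul
  obtain ⟨t, ht⟩ := hdvd
  have hpt : h₁ + h₃ = t * h₂ := by
    have h0 : (k₂ - h₂) * (h₂ * t) = (k₂ - h₂) * (h₁ + h₃) := by
      rw [← hdet, ht]; ring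
    have := mul_left_cancel₀ (by omega : k₂ - h₂ ≠ 0) h0
    linarith
  -- floor identification
  have hf₁ : ⌊(((k₁ - h₁) + m : ℤ) : ℚ) / (((k₂ - h₂ : ℤ)) : ℚ)⌋ = t :=
    floor_eq_of hq₂0 (by nlinarith [ht, hq₃m]) (by nlinarith [ht, hn₂])
  have hf₂ : ⌊(((k₃ - h₃) + m : ℤ) : ℚ) / (((k₂ - h₂ : ℤ)) : ℚ)⌋ = t :=
    floor_eq_of hq₂0 (by nlinarith [ht, hq₁m]) (by nlinarith [ht, hn₁])
  have hg₁ : ⌊((k₁ : ℚ) - (h₁ : ℚ) + (m : ℚ)) / ((k₂ : ℚ) - (h₂ : ℚ))⌋ = t := by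
    have hcst : ((k₁ : ℚ) - (h₁ : ℚ) + (m : ℚ)) / ((k₂ : ℚ) - (h₂ : ℚ))
        = (((k₁ - h₁) + m : ℤ) : ℚ) / (((k₂ - h₂ : ℤ)) : ℚ) := by push_cast; ring
    rw [hcst]; exact hf₁
  have hg₂ : ⌊((k₃ : ℚ) - (h₃ : ℚ) + (m : ℚ)) / ((k₂ : ℚ) - (h₂ : ℚ))⌋ = t := by
    have hcst : ((k₃ : ℚ) - (h₃ : ℚ) + (m : ℚ)) / ((k₂ : ℚ) - (h₂ : ℚ))
        = (((k₃ - h₃) + m : ℤ) : ℚ) / (((k₂ - h₂ : ℤ)) : ℚ) := by push_cast; ring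
    rw [hcst]; exact hf₂
  rw [hg₁, hg₂]
  exact ⟨by linear_combination hpt, by linear_combination ht + hpt,
    by linear_combination hpt, by linear_combination ht + hpt⟩
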